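/- Let f : X → Y be a coarse map between metric spaces. If for all subsets A, B ⊆ X, A being coarsely disjoint from B implies f(A) is coarsely disjoint from f(B), then f is coarsely injective. -/
import Mathlib


open Set Bornology Metric

/-- `E ⊆ X × X` is an entourage if `sup_{(x,y) ∈ E} d(x,y) < ∞`. -/
def IsEnt {X : Type*} [PseudoMetricSpace X] (E : Set (X × X)) : Prop :=
  ∃ C : ℝ, ∀ p ∈ E, dist p.1 p.2 ≤ C

/-- `E[A] = {y : ∃ a ∈ A, (a,y) ∈ E}`. -/
def entImg {X : Type*} [PseudoMetricSpace X] (E : Set (X × X)) (A : Set X) : Set X :=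
  {y | ∃ a ∈ A, (a, y) ∈ E}

/-- `A` and `B` are not coarsely disjoint: some entourage `E` has `E[A] ∩ E[B]` unbounded. -/
def NotCD {X : Type*} [PseudoMetricSpace X] (A B : Set X) : Prop :=
  ∃ E : Set (X × X), IsEnt E ∧ ¬ IsBounded (entImg E A ∩ entImg E B)

/-- `A` and `B` are coarsely disjoint: every entourage `E` has `E[A] ∩ E[B]` bounded. -/
def CD {X : Type*} [PseudoMetricSpace X] (A B : Set X) : Prop :=
  ∀ E : Set (X × X), IsEnt E → IsBounded (entImg E A ∩ entImg E B)

/-- Coarsely uniform: `f × f` maps entourages to entourages. -/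
def CUnif {X Y : Type*} [PseudoMetricSpace X] [PseudoMetricSpace Y] (f : X → Y) : Prop :=
  ∀ E : Set (X × X), IsEnt E → IsEnt ((fun p : X × X => (f p.1, f p.2)) '' E)

/-- Coarsely proper: preimages of bounded sets are bounded. -/
def CProper {X Y : Type*} [PseudoMetricSpace X] [PseudoMetricSpace Y] (f : X → Y) : Prop :=
  ∀ B : Set Y, IsBounded B → IsBounded (f ⁻¹' B)

/-- A coarse map is coarsely uniform and coarsely proper. -/
def Coarse {X Y : Type*} [PseudoMetricSpace X] [PseudoMetricSpace Y] (f : X → Y) : Prop :=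
  CUnif f ∧ CProper f

/-- Coarsely injective: `(f × f)⁻¹` of any entourage is an entourage. -/
def CInj {X Y : Type*} [PseudoMetricSpace X] [PseudoMetricSpace Y] (f : X → Y) : Prop :=
  ∀ F : Set (Y × Y), IsEnt F → IsEnt ((fun p : X × X => (f p.1, f p.2)) ⁻¹' F)

/-- A coarse ultrafilter on a metric space. -/
structure CUF (X : Type*) [PseudoMetricSpace X] where
  sets : Set (Set X)
  pairClose : ∀ A ∈ sets, ∀ B ∈ sets, NotCD A B
  split : ∀ A B : Set X, A ∪ B ∈ sets → A ∈ sets ∨ B ∈ sets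
  univ_mem : Set.univ ∈ sets

/-- Pushforward system of sets of a coarse ultrafilter along a map. -/
def push {X Y : Type*} [PseudoMetricSpace X] [PseudoMetricSpace Y] (f : X → Y) (F : CUF X) :
    Set (Set Y) :=
  {A : Set Y | f ⁻¹' A ∈ F.sets}

/-- Asymptotically alike coarse ultrafilters. -/
def AAlike {X : Type*} [PseudoMetricSpace X] (F G : CUF X) : Prop :=
  ∀ A ∈ F.sets, ∀ B ∈ G.sets, NotCD A B

/-- Asymptotically alike, on raw systems of subsets. -/
def AAlikeS {X : Type*} [PseudoMetricSpace X] (S T : Set (Set X)) : Prop :=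
  ∀ A ∈ S, ∀ B ∈ T, NotCD A B

/-- Escape lemma: if pairs with `f`-images `C`-close can have arbitrarily separated
coordinates, they can also escape any ball. -/
lemma escape_lemma {X Y : Type*} [PseudoMetricSpace X] [PseudoMetricSpace Y]
    (f : X → Y) (hu : CUnif f) (hp : CProper f) (C : ℝ)
    (H : ∀ D : ℝ, ∃ p : X × X, dist (f p.1) (f p.2) ≤ C ∧ D < dist p.1 p.2)
    (x₀ : X) (r : ℝ) :
    ∃ p : X × X, dist (f p.1) (f p.2) ≤ C ∧ r < dist p.1 x₀ ∧ r < dist p.2 x₀ ∧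
      r < dist p.1 p.2 := by
  have hEnt : IsEnt ((Metric.closedBall x₀ r) ×ˢ (Metric.closedBall x₀ r)) := by
    refine ⟨r + r, fun p hp => ?_⟩
    have h1 : dist p.1 x₀ ≤ r := hp.1
    have h2 : dist p.2 x₀ ≤ r := hp.2
    calc dist p.1 p.2 ≤ dist p.1 x₀ + dist p.2 x₀ := dist_triangle_right _ _ _
      _ ≤ r + r := add_le_add h1 h2
  obtain ⟨C₂, hC₂⟩ := hu _ hEnt
  have himg : IsBounded (f '' Metric.closedBall x₀ r) := by
    rw [Metric.isBounded_iff]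
    refine ⟨C₂, ?_⟩
    rintro _ ⟨u, hu', rfl⟩ _ ⟨v, hv', rfl⟩
    exact hC₂ (f u, f v) ⟨(u, v), ⟨hu', hv'⟩, rfl⟩
  obtain ⟨R, hR⟩ := himg.subset_closedBall (f x₀)
  have hW : IsBounded (f ⁻¹' (Metric.closedBall (f x₀) (R + C))) :=
    hp _ Metric.isBounded_closedBall
  obtain ⟨ρ, hρ⟩ := hW.subset_closedBall x₀
  obtain ⟨p, hpC, hpD⟩ := H (|r| + |ρ|)
  have hrD : r ≤ |r| + |ρ| := le_add_of_le_of_nonneg (le_abs_self r) (abs_nonneg ρ)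
  have key : ∀ u v : X, dist (f u) (f v) ≤ C → dist u x₀ ≤ r → dist v x₀ ≤ ρ := by
    intro u v huv hur
    have hfu : f u ∈ Metric.closedBall (f x₀) R := hR ⟨u, hur, rfl⟩
    have hfv : dist (f v) (f x₀) ≤ R + C := by
      calc dist (f v) (f x₀) ≤ dist (f v) (f u) + dist (f u) (f x₀) := dist_triangle _ _ _
        _ ≤ C + R := add_le_add (by rwa [dist_comm]) hfu
        _ = R + C := by ring
    exact hρ (Metric.mem_closedBall.mpr hfv)
  refine ⟨p, hpC, ?_, ?_, lt_of_le_of_lt hrD hpD⟩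
  · by_contra hc
    push_neg at hc
    have h2 : dist p.2 x₀ ≤ ρ := key p.1 p.2 hpC hc
    have : dist p.1 p.2 ≤ |r| + |ρ| := by
      calc dist p.1 p.2 ≤ dist p.1 x₀ + dist p.2 x₀ := dist_triangle_right _ _ _
        _ ≤ |r| + |ρ| := add_le_add (hc.trans (le_abs_self r)) (h2.trans (le_abs_self ρ))
    linarith
  · by_contra hc
    push_neg at hc
    have h2 : dist p.1 x₀ ≤ ρ := key p.2 p.1 (by rwa [dist_comm]) hc
    have : dist p.1 p.2 ≤ |r| + |ρ| := by
      calc dist p.1 p.2 ≤ dist p.1 x₀ + dist p.2 x₀ := dist_triangle_right _ _ _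
        _ ≤ |ρ| + |r| := add_le_add (h2.trans (le_abs_self ρ)) (hc.trans (le_abs_self r))
        _ = |r| + |ρ| := by ring
    linarith

/-- Construction of a pair of sequences escaping to infinity and mutually separated. -/
lemma exists_seq {X : Type*} [PseudoMetricSpace X] (P : X × X → Prop) (x₀ : X)
    (esc : ∀ r : ℝ, ∃ p : X × X, P p ∧ r < dist p.1 x₀ ∧ r < dist p.2 x₀ ∧ r < dist p.1 p.2) :
    ∃ (a b : ℕ → X) (ρ : ℕ → ℝ),
      (∀ k : ℕ, P (a k, b k)) ∧
      (∀ k : ℕ, (k : ℝ) < dist (a k) (b k)) ∧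
      (∀ k : ℕ, dist (a k) x₀ ≤ ρ k ∧ dist (b k) x₀ ≤ ρ k) ∧
      (∀ j k : ℕ, j ≤ k → ρ j ≤ ρ k) ∧
      (∀ j k : ℕ, j < k → (k : ℝ) < dist (a k) (a j) ∧ (k : ℝ) < dist (a k) (b j) ∧
          (k : ℝ) < dist (b k) (a j) ∧ (k : ℝ) < dist (b k) (b j)) ∧
      (∀ k : ℕ, (k : ℝ) ≤ dist (b k) x₀) := by
  classical
  let s : ℕ → ℝ × (X × X) := fun n => Nat.rec
    ((fun p => (max 0 (max (dist p.1 x₀) (dist p.2 x₀)), p)) (esc 0).choose)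
    (fun k prev => (fun p => (max (prev.1 + (k + 1)) (max (dist p.1 x₀) (dist p.2 x₀)), p))
      ((esc (prev.1 + (k + 1))).choose)) n
  set a : ℕ → X := fun k => (s k).2.1 with ha
  set b : ℕ → X := fun k => (s k).2.2 with hb
  set ρ : ℕ → ℝ := fun k => (s k).1 with hρ
  have hs0 : (s 0).2 = (esc 0).choose := rfl
  have hsS : ∀ k, (s (k + 1)).2 = (esc ((s k).1 + (k + 1))).choose := fun k => rfl
  have hρ0 : (s 0).1 = max 0 (max (dist (a 0) x₀) (dist (b 0) x₀)) := rfl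
  have hρS : ∀ k, (s (k + 1)).1 =
      max ((s k).1 + (k + 1)) (max (dist (a (k + 1)) x₀) (dist (b (k + 1)) x₀)) := fun k => rfl
  have hρnn : ∀ k, 0 ≤ ρ k := by
    intro k
    cases k with
    | zero => exact le_max_left _ _
    | succ m =>
      calc (0 : ℝ) ≤ dist (a (m + 1)) x₀ := dist_nonneg
        _ ≤ max (dist (a (m + 1)) x₀) (dist (b (m + 1)) x₀) := le_max_left _ _
        _ ≤ ρ (m + 1) := le_max_right _ _
  have hmem : ∀ k, dist (a k) x₀ ≤ ρ k ∧ dist (b k) x₀ ≤ ρ k := by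
    intro k
    cases k with
    | zero =>
      constructor
      · exact le_trans (le_max_left _ _) (le_max_right _ _)
      · exact le_trans (le_max_right _ _) (le_max_right _ _)
    | succ m =>
      constructor
      · exact le_trans (le_max_left _ _) (le_max_right _ _)
      · exact le_trans (le_max_right _ _) (le_max_right _ _)
  have hmonoS : ∀ k, ρ k ≤ ρ (k + 1) := by
    intro k
    have : ρ k + (k + 1) ≤ ρ (k + 1) := le_max_left _ _
    have hk : (0 : ℝ) ≤ (k : ℝ) + 1 := by positivity
    linarith
  have hmono : ∀ j k : ℕ, j ≤ k → ρ j ≤ ρ k := by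
    intro j k hjk
    induction k with
    | zero => simp_all
    | succ m ih =>
      rcases Nat.lt_or_ge j (m + 1) with hlt | hge
      · exact le_trans (ih (Nat.lt_succ_iff.mp hlt)) (hmonoS m)
      · have : j = m + 1 := le_antisymm hjk hge
        simp [this]
  have hspecS : ∀ k, P (a (k + 1), b (k + 1)) ∧
      ρ k + (k + 1) < dist (a (k + 1)) x₀ ∧
      ρ k + (k + 1) < dist (b (k + 1)) x₀ ∧
      ρ k + (k + 1) < dist (a (k + 1)) (b (k + 1)) := by
    intro k
    have := (esc ((s k).1 + (k + 1))).choose_spec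
    rw [← hsS k] at this
    exact this
  have hspec0 : P (a 0, b 0) ∧ (0 : ℝ) < dist (a 0) x₀ ∧ (0 : ℝ) < dist (b 0) x₀ ∧
      (0 : ℝ) < dist (a 0) (b 0) := by
    have := (esc 0).choose_spec
    rw [← hs0] at this
    exact this
  refine ⟨a, b, ρ, ?_, ?_, hmem, hmono, ?_, ?_⟩
  · intro k
    cases k with
    | zero => exact hspec0.1
    | succ m => exact (hspecS m).1
  · intro k
    cases k with
    | zero => exact_mod_cast hspec0.2.2.2
    | succ m =>
      have h1 := (hspecS m).2.2.2
      have h2 := hρnn m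
      push_cast
      push_cast at h1
      linarith
  · intro j k hjk
    obtain ⟨m, rfl⟩ : ∃ m, k = m + 1 := ⟨k - 1, by omega⟩
    have hjm : j ≤ m := Nat.lt_succ_iff.mp hjk
    have hja : dist (a j) x₀ ≤ ρ m := le_trans (hmem j).1 (hmono j m hjm)
    have hjb : dist (b j) x₀ ≤ ρ m := le_trans (hmem j).2 (hmono j m hjm)
    have h1 := (hspecS m).2.1
    have h2 := (hspecS m).2.2.1
    have t1 := dist_triangle (a (m + 1)) (a j) x₀
    have t2 := dist_triangle (a (m + 1)) (b j) x₀
    have t3 := dist_triangle (b (m + 1)) (a j) x₀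
    have t4 := dist_triangle (b (m + 1)) (b j) x₀
    push_cast
    push_cast at h1 h2
    refine ⟨by linarith, by linarith, by linarith, by linarith⟩
  · intro k
    cases k with
    | zero => simpa using dist_nonneg
    | succ m =>
      have h2 := (hspecS m).2.2.1
      have := hρnn m
      push_cast
      push_cast at h2
      linarith

/-- a coarse map preserving coarse disjointness is coarsely injective. -/
theorem stmt1 {X Y : Type*} [MetricSpace X] [MetricSpace Y] (f : X → Y)
    (hf : Coarse f)
    (h : ∀ A B : Set X, CD A B → CD (f '' A) (f '' B)) :
    CInj f := by
  classical
  obtain ⟨hu, hp⟩ := hf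
  intro F hF
  by_contra hne
  obtain ⟨C₀, hC₀⟩ := hF
  set C := max C₀ 0 with hCdef
  have hC0 : (0 : ℝ) ≤ C := le_max_right _ _
  have H : ∀ D : ℝ, ∃ p : X × X, dist (f p.1) (f p.2) ≤ C ∧ D < dist p.1 p.2 := by
    intro D
    rw [IsEnt] at hne
    push_neg at hne
    obtain ⟨p, hpF, hpD⟩ := hne D
    exact ⟨p, le_trans (hC₀ _ hpF) (le_max_left _ _), hpD⟩
  obtain ⟨p₀, -, -⟩ := H 0
  obtain ⟨a, b, ρ, hPab, hab, hmem, hmono, hsep, hbx⟩ :=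
    exists_seq (fun p : X × X => dist (f p.1) (f p.2) ≤ C) p₀.1
      (escape_lemma f hu hp C H p₀.1)
  set x₀ := p₀.1
  set A : Set X := Set.range a with hA
  set B : Set X := Set.range b with hB
  have hCD : CD A B := by
    intro E hE
    obtain ⟨R, hR⟩ := hE
    set N := Nat.ceil (2 * R) with hN
    apply (Metric.isBounded_closedBall (x := x₀) (r := R + ρ N)).subset
    rintro z ⟨⟨u, ⟨i, rfl⟩, hu'⟩, ⟨v, ⟨j, rfl⟩, hv'⟩⟩
    have hiz : dist (a i) z ≤ R := hR (a i, z) hu'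
    have hjz : dist (b j) z ≤ R := hR (b j, z) hv'
    have hij : dist (a i) (b j) ≤ 2 * R := by
      have := dist_triangle (a i) z (b j)
      have := dist_comm (b j) z
      nlinarith [dist_triangle (a i) z (b j), dist_comm z (b j) ▸ hjz]
    have hi2R : (i : ℝ) < 2 * R := by
      rcases lt_trichotomy i j with hlt | heq | hgt
      · have := (hsep i j hlt).2.2.1
        rw [dist_comm] at this
        have hj : (j : ℝ) < 2 * R := lt_of_lt_of_le this hij
        have : (i : ℝ) < (j : ℝ) := by exact_mod_cast hlt
        linarith
      · subst heq
        exact lt_of_lt_of_le (hab i) hij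
      · exact lt_of_lt_of_le ((hsep j i hgt).2.1) hij
    have hiN : i ≤ N := by
      have h2RN : (2 * R : ℝ) ≤ (N : ℝ) := Nat.le_ceil _
      have : (i : ℝ) < (N : ℝ) := lt_of_lt_of_le hi2R h2RN
      exact_mod_cast this.le
    have : dist z x₀ ≤ R + ρ N := by
      calc dist z x₀ ≤ dist z (a i) + dist (a i) x₀ := dist_triangle _ _ _
        _ ≤ R + ρ N := add_le_add (by rwa [dist_comm]) (le_trans (hmem i).1 (hmono i N hiN))
    exact this
  have hCDf := h A B hCD
  have hE' : IsEnt {q : Y × Y | dist q.1 q.2 ≤ C} := ⟨C, fun q hq => hq⟩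
  have hBnd := hCDf _ hE'
  have hsub : f '' B ⊆ entImg {q : Y × Y | dist q.1 q.2 ≤ C} (f '' A) ∩
      entImg {q : Y × Y | dist q.1 q.2 ≤ C} (f '' B) := by
    rintro _ ⟨x, ⟨k, rfl⟩, rfl⟩
    constructor
    · exact ⟨f (a k), ⟨a k, ⟨k, rfl⟩, rfl⟩, hPab k⟩
    · exact ⟨f (b k), ⟨b k, ⟨k, rfl⟩, rfl⟩, by simpa using hC0⟩
  have hfB : IsBounded (f '' B) := hBnd.subset hsub
  have hBbdd : IsBounded B := (hp _ hfB).subset (Set.subset_preimage_image f B)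
  obtain ⟨M, hM⟩ := hBbdd.subset_closedBall x₀
  set k := Nat.ceil M + 1 with hk
  have h1 : dist (b k) x₀ ≤ M := hM ⟨k, rfl⟩
  have h2 : (k : ℝ) ≤ dist (b k) x₀ := hbx k
  have h3 : M ≤ (Nat.ceil M : ℝ) := Nat.le_ceil M
  have h4 : (k : ℝ) = (Nat.ceil M : ℝ) + 1 := by push_cast [hk]; ring
  linarith
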